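/- In the setting of the joint smoothness lemma: for all x, x' and y, y' with ‖y‖, ‖y'‖ ≤ D_y, the x-partial gradient satisfies ‖∇_x f₀(x,y) - ∇_x f₀(x',y')‖² ≤ (2L_g² + 4L_ℓ²D_y²)‖x - x'‖² + 4G_ℓ²‖y - y'‖². -/
import Mathlib

open RealInnerProductSpace

lemma sq_bound_aux (v p q r : ℝ) (hv : 0 ≤ v) (hp : 0 ≤ p) (hq : 0 ≤ q) (hr : 0 ≤ r)
    (h : v ≤ p + (q + r)) : v ^ 2 ≤ 2 * p ^ 2 + 4 * q ^ 2 + 4 * r ^ 2 := by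
  nlinarith [sq_nonneg (p - q - r), sq_nonneg (q - r), sq_nonneg (p + q + r)]

theorem stmt_7 (d m : ℕ) (Lg Gℓ Lℓ Dy : ℝ)
    (g : EuclideanSpace ℝ (Fin d) → ℝ) (g' : EuclideanSpace ℝ (Fin d) → EuclideanSpace ℝ (Fin d))
    (ℓ : EuclideanSpace ℝ (Fin d) → EuclideanSpace ℝ (Fin m))
    (Dℓ : EuclideanSpace ℝ (Fin d) → (EuclideanSpace ℝ (Fin d) →L[ℝ] EuclideanSpace ℝ (Fin m)))
    (hg : ∀ x, HasGradientAt g (g' x) x)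
    (hgL : ∀ x x', ‖g' x - g' x'‖ ≤ Lg * ‖x - x'‖)
    (hℓ : ∀ x, HasFDerivAt ℓ (Dℓ x) x)
    (hGℓ : ∀ x, ‖Dℓ x‖ ≤ Gℓ)
    (hLℓ : ∀ x x', ‖Dℓ x - Dℓ x'‖ ≤ Lℓ * ‖x - x'‖) :
    ∀ x x' : EuclideanSpace ℝ (Fin d), ∀ y y' : EuclideanSpace ℝ (Fin m),
      ‖y‖ ≤ Dy → ‖y'‖ ≤ Dy →
      ‖(g' x - ContinuousLinearMap.adjoint (Dℓ x) y) -
        (g' x' - ContinuousLinearMap.adjoint (Dℓ x') y')‖ ^ 2 ≤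
      (2 * Lg ^ 2 + 4 * Lℓ ^ 2 * Dy ^ 2) * ‖x - x'‖ ^ 2 + 4 * Gℓ ^ 2 * ‖y - y'‖ ^ 2 := by
  intro x x' y y' hy hy'
  set A : EuclideanSpace ℝ (Fin m) →L[ℝ] EuclideanSpace ℝ (Fin d) :=
    ContinuousLinearMap.adjoint (Dℓ x) - ContinuousLinearMap.adjoint (Dℓ x') with hAdef
  have hAn : ‖A‖ = ‖Dℓ x - Dℓ x'‖ := by
    rw [hAdef, ← map_sub]
    exact LinearIsometryEquiv.norm_map ContinuousLinearMap.adjoint _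
  have hAle : ‖A‖ ≤ Lℓ * ‖x - x'‖ := hAn ▸ hLℓ x x'
  have hsplit : (g' x - ContinuousLinearMap.adjoint (Dℓ x) y) -
      (g' x' - ContinuousLinearMap.adjoint (Dℓ x') y')
      = (g' x - g' x') - (A y + ContinuousLinearMap.adjoint (Dℓ x') (y - y')) := by
    simp [hAdef, ContinuousLinearMap.sub_apply, map_sub]
    abel
  have h1 : ‖(g' x - ContinuousLinearMap.adjoint (Dℓ x) y) -
      (g' x' - ContinuousLinearMap.adjoint (Dℓ x') y')‖
      ≤ ‖g' x - g' x'‖ + (‖A y‖ + ‖ContinuousLinearMap.adjoint (Dℓ x') (y - y')‖) := by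
    rw [hsplit]
    exact (norm_sub_le _ _).trans (by gcongr; exact norm_add_le _ _)
  have h2 : ‖A y‖ ≤ (Lℓ * ‖x - x'‖) * Dy := by
    calc ‖A y‖ ≤ ‖A‖ * ‖y‖ := A.le_opNorm y
    _ ≤ (Lℓ * ‖x - x'‖) * Dy := by
        apply mul_le_mul hAle hy (norm_nonneg y) ((norm_nonneg A).trans hAle)
  have h3 : ‖ContinuousLinearMap.adjoint (Dℓ x') (y - y')‖ ≤ Gℓ * ‖y - y'‖ := by
    calc ‖ContinuousLinearMap.adjoint (Dℓ x') (y - y')‖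
        ≤ ‖ContinuousLinearMap.adjoint (Dℓ x')‖ * ‖y - y'‖ := ContinuousLinearMap.le_opNorm _ _
    _ ≤ Gℓ * ‖y - y'‖ := by
        apply mul_le_mul_of_nonneg_right _ (norm_nonneg _)
        rw [show ‖ContinuousLinearMap.adjoint (Dℓ x')‖ = ‖Dℓ x'‖ from
          LinearIsometryEquiv.norm_map ContinuousLinearMap.adjoint _]
        exact hGℓ x'
  have hgle : ‖g' x - g' x'‖ ≤ Lg * ‖x - x'‖ := hgL x x'
  have key := sq_bound_aux _ (Lg * ‖x - x'‖) ((Lℓ * ‖x - x'‖) * Dy) (Gℓ * ‖y - y'‖)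
    (norm_nonneg _) ((norm_nonneg _).trans hgle) ((norm_nonneg _).trans h2)
    ((norm_nonneg _).trans h3)
    (h1.trans (by gcongr))
  calc ‖(g' x - ContinuousLinearMap.adjoint (Dℓ x) y) -
      (g' x' - ContinuousLinearMap.adjoint (Dℓ x') y')‖ ^ 2
      ≤ 2 * (Lg * ‖x - x'‖) ^ 2 + 4 * ((Lℓ * ‖x - x'‖) * Dy) ^ 2 + 4 * (Gℓ * ‖y - y'‖) ^ 2 := key
    _ = (2 * Lg ^ 2 + 4 * Lℓ ^ 2 * Dy ^ 2) * ‖x - x'‖ ^ 2 + 4 * Gℓ ^ 2 * ‖y - y'‖ ^ 2 := by ring
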